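/- (Algebraic core of the theorem on expectations under linear SDEs.) Let d be a positive natural number, let S be a symmetric positive definite d×d real matrix, let Q and D be d×d real matrices, and let A be a symmetric d×d real matrix satisfying the Lyapunov relation D = −A·S − S·Aᵀ + Q. Then vec(A) = (S ⊕ S)⁻¹ · vec(Q − D). Consequently, A is the unique symmetric matrix satisfying D = −A·S − S·Aᵀ + Q, and if moreover m, m' ∈ ℝ^d and b := m' + A·m, then the matrix B defined by vec(B) = (S ⊕ S)⁻¹ · vec(Q − D) satisfies B = A and m' + B·m = b. -/

import Mathlib

open Matrix
open scoped Kronecker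

/-- Column-stacking vectorization of a square matrix: `vec A (i, j) = A j i`. -/
def Matrix.vecCol {d : ℕ} (A : Matrix (Fin d) (Fin d) ℝ) : Fin d × Fin d → ℝ :=
  fun p => A p.2 p.1

lemma vecCol_injective {d : ℕ} : Function.Injective (Matrix.vecCol (d := d)) := by
  intro X Y h
  ext i j
  exact congrFun h (j, i)

lemma kron_one_mulVec_vecCol {d : ℕ} (S M : Matrix (Fin d) (Fin d) ℝ) :
    ((1 : Matrix (Fin d) (Fin d) ℝ) ⊗ₖ S) *ᵥ M.vecCol = (S * M).vecCol := by
  ext ⟨i, k⟩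
  simp [Matrix.vecCol, Matrix.mulVec, Matrix.mul_apply, dotProduct,
    Fintype.sum_prod_type, Matrix.one_apply, Finset.mul_sum]

lemma one_kron_mulVec_vecCol {d : ℕ} (S M : Matrix (Fin d) (Fin d) ℝ) :
    (S ⊗ₖ (1 : Matrix (Fin d) (Fin d) ℝ)) *ᵥ M.vecCol = (M * Sᵀ).vecCol := by
  ext ⟨i, k⟩
  simp [Matrix.vecCol, Matrix.mulVec, Matrix.mul_apply, dotProduct,
    Fintype.sum_prod_type, Matrix.one_apply, Finset.mul_sum, mul_comm]

lemma posDef_one_kron {d : ℕ} {S : Matrix (Fin d) (Fin d) ℝ} (hS : S.PosDef) :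
    ((1 : Matrix (Fin d) (Fin d) ℝ) ⊗ₖ S).PosDef := by
  rw [posDef_iff_dotProduct_mulVec]
  constructor
  · have h1 : Sᵀ = S := hS.isHermitian
    show _ᴴ = _
    simp only [conjTranspose_eq_transpose_of_trivial, ← kroneckerMap_transpose,
      transpose_one, h1]
  · intro x hx
    have hquad : x ⬝ᵥ (((1 : Matrix (Fin d) (Fin d) ℝ) ⊗ₖ S) *ᵥ x)
        = ∑ i, (fun k => x (i,k)) ⬝ᵥ (S *ᵥ fun k => x (i,k)) := by
      simp [dotProduct, Matrix.mulVec, Fintype.sum_prod_type, Matrix.one_apply,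
        Finset.mul_sum, mul_ite]
    rw [show star x = x from rfl, hquad]
    obtain ⟨⟨i0, k0⟩, hi0⟩ := Function.ne_iff.mp hx
    refine Finset.sum_pos' (fun i _ => ?_) ⟨i0, Finset.mem_univ _, ?_⟩
    · by_cases h : (fun k => x (i, k)) = 0
      · rw [h]; simp
      · exact (hS.dotProduct_mulVec_pos h).le
    · exact hS.dotProduct_mulVec_pos (fun h => hi0 (congrFun h k0))

lemma posDef_kron_one {d : ℕ} {S : Matrix (Fin d) (Fin d) ℝ} (hS : S.PosDef) :
    (S ⊗ₖ (1 : Matrix (Fin d) (Fin d) ℝ)).PosDef := by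
  rw [posDef_iff_dotProduct_mulVec]
  constructor
  · have h1 : Sᵀ = S := hS.isHermitian
    show _ᴴ = _
    simp only [conjTranspose_eq_transpose_of_trivial, ← kroneckerMap_transpose,
      transpose_one, h1]
  · intro x hx
    have hquad : x ⬝ᵥ ((S ⊗ₖ (1 : Matrix (Fin d) (Fin d) ℝ)) *ᵥ x)
        = ∑ k, (fun i => x (i,k)) ⬝ᵥ (S *ᵥ fun i => x (i,k)) := by
      simp only [dotProduct, Matrix.mulVec, kroneckerMap_apply, Fintype.sum_prod_type,
        Matrix.one_apply, mul_ite, mul_one, mul_zero, Finset.mul_sum, Finset.sum_ite_eq',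
        Finset.mem_univ, if_true]
      rw [Finset.sum_comm]
      simp [dotProduct, Matrix.mulVec, Finset.mul_sum]
    rw [show star x = x from rfl, hquad]
    obtain ⟨⟨i0, k0⟩, hi0⟩ := Function.ne_iff.mp hx
    refine Finset.sum_pos' (fun k _ => ?_) ⟨k0, Finset.mem_univ _, ?_⟩
    · by_cases h : (fun i => x (i, k)) = 0
      · rw [h]; simp
      · exact (hS.dotProduct_mulVec_pos h).le
    · exact hS.dotProduct_mulVec_pos (fun h => hi0 (congrFun h i0))

/-- Algebraic core of the theorem on expectations under linear SDEs: if `S` is symmetric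
positive definite and the symmetric matrix `A` satisfies the Lyapunov relation
`D = -A * S - S * Aᵀ + Q`, then `vec A = (S ⊕ S)⁻¹ *ᵥ vec (Q - D)`; `A` is the unique
symmetric solution; and the matrix `B` with `vec B = (S ⊕ S)⁻¹ *ᵥ vec (Q - D)` satisfies
`B = A` and `m' + B *ᵥ m = b` whenever `b = m' + A *ᵥ m`. -/
theorem vec_eq_kroneckerSum_inv_vec_of_lyapunov (d : ℕ) (hd : 0 < d)
    (S Q D A : Matrix (Fin d) (Fin d) ℝ) (hS : S.PosDef) (hSsymm : Sᵀ = S)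
    (hAsymm : Aᵀ = A) (hlyap : D = -(A * S) - S * Aᵀ + Q) :
    A.vecCol =
      ((1 : Matrix (Fin d) (Fin d) ℝ) ⊗ₖ S + S ⊗ₖ (1 : Matrix (Fin d) (Fin d) ℝ))⁻¹ *ᵥ
        (Q - D).vecCol ∧
    (∀ A' : Matrix (Fin d) (Fin d) ℝ, A'ᵀ = A' →
      D = -(A' * S) - S * A'ᵀ + Q → A' = A) ∧
    (∀ (m m' b : Fin d → ℝ), b = m' + A *ᵥ m →
      ∀ B : Matrix (Fin d) (Fin d) ℝ,
        B.vecCol =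
          ((1 : Matrix (Fin d) (Fin d) ℝ) ⊗ₖ S + S ⊗ₖ (1 : Matrix (Fin d) (Fin d) ℝ))⁻¹ *ᵥ
            (Q - D).vecCol →
        B = A ∧ m' + B *ᵥ m = b) := by
  set K := (1 : Matrix (Fin d) (Fin d) ℝ) ⊗ₖ S + S ⊗ₖ (1 : Matrix (Fin d) (Fin d) ℝ) with hK
  have hKpd : K.PosDef := (posDef_one_kron hS).add (posDef_kron_one hS)
  have hKdet : IsUnit K.det := hKpd.isUnit.map (MonoidHom.id _) |> fun _ =>
    (Matrix.isUnit_iff_isUnit_det K).mp hKpd.isUnit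
  have hKinv : K⁻¹ * K = 1 := Matrix.nonsing_inv_mul K hKdet
  -- key identity
  have key : ∀ M : Matrix (Fin d) (Fin d) ℝ, Mᵀ = M →
      (D = -(M * S) - S * Mᵀ + Q) → K *ᵥ M.vecCol = (Q - D).vecCol := by
    intro M hMsymm hMlyap
    have hQD : Q - D = S * M + M * Sᵀ := by
      rw [hMlyap, hMsymm]
      have : S * M = (M * S)ᵀ := by rw [Matrix.transpose_mul, hMsymm, hSsymm]
      rw [hSsymm]
      abel
    rw [hK, Matrix.add_mulVec, kron_one_mulVec_vecCol, one_kron_mulVec_vecCol, hQD]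
    ext p
    simp [Matrix.vecCol]
  have hKA : K *ᵥ A.vecCol = (Q - D).vecCol := key A hAsymm hlyap
  have recover : ∀ M : Matrix (Fin d) (Fin d) ℝ, K *ᵥ M.vecCol = (Q - D).vecCol →
      M.vecCol = K⁻¹ *ᵥ (Q - D).vecCol := by
    intro M hM
    rw [← hM, Matrix.mulVec_mulVec, hKinv, Matrix.one_mulVec]
  have h1 : A.vecCol = K⁻¹ *ᵥ (Q - D).vecCol := recover A hKA
  refine ⟨h1, ?_, ?_⟩
  · intro A' hA'symm hA'lyap
    exact vecCol_injective ((recover A' (key A' hA'symm hA'lyap)).trans h1.symm)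
  · intro m m' b hb B hB
    have hBA : B = A := vecCol_injective (hB.trans h1.symm)
    exact ⟨hBA, by rw [hBA, hb]⟩
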